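/- The trace of the (2q)-Einstein–Lovelock tensor equals (n-2q) times the (2q)-Gauss-Bonnet curvature: tr_g T_{2q} = (n-2q)·h_{2q}. -/

import Mathlib

open scoped BigOperators
open scoped Classical

noncomputable section

/-- A `(p,q)`-double form on `ℝⁿ`, given by its components with respect to the
standard orthonormal basis: a scalar-valued function of a row multi-index and a
column multi-index. -/
def DForm (n p q : ℕ) : Type := (Fin p → Fin n) → (Fin q → Fin n) → ℝ

namespace DForm

variable {n : ℕ}

/-- Transport a double form along equalities of the bidegrees. -/
def cast' {p q p' q' : ℕ} (hp : p = p') (hq : q = q') (ω : DForm n p q) :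
    DForm n p' q' :=
  fun I J => ω (fun a => I (Fin.cast hp a)) (fun b => J (Fin.cast hq b))

/-- A double form is alternating in each of its two blocks of arguments. -/
def IsAlt {p q : ℕ} (ω : DForm n p q) : Prop :=
  (∀ (σ : Equiv.Perm (Fin p)) (I : Fin p → Fin n) (J : Fin q → Fin n),
      ω (I ∘ σ) J = ((Equiv.Perm.sign σ : ℤ) : ℝ) * ω I J) ∧
  (∀ (τ : Equiv.Perm (Fin q)) (I : Fin p → Fin n) (J : Fin q → Fin n),
      ω I (J ∘ τ) = ((Equiv.Perm.sign τ : ℤ) : ℝ) * ω I J) ∧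
  (∀ (I : Fin p → Fin n) (J : Fin q → Fin n),
      (¬ Function.Injective I ∨ ¬ Function.Injective J) → ω I J = 0)

/-- A `(p,p)`-double form is symmetric. -/
def IsSym {p : ℕ} (ω : DForm n p p) : Prop := ∀ I J, ω I J = ω J I

/-- The exterior (Kulkarni–Nomizu type) product of double forms:
`(α₁⊗β₁)·(α₂⊗β₂) = (α₁∧α₂)⊗(β₁∧β₂)` in components. -/
def mul {p q r s : ℕ} (ω : DForm n p q) (θ : DForm n r s) :
    DForm n (p + r) (q + s) :=
  fun I J =>
    (((p.factorial * r.factorial * q.factorial * s.factorial : ℕ) : ℝ))⁻¹ *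
      ∑ σ : Equiv.Perm (Fin (p + r)), ∑ τ : Equiv.Perm (Fin (q + s)),
        ((Equiv.Perm.sign σ : ℤ) : ℝ) * ((Equiv.Perm.sign τ : ℤ) : ℝ) *
          ω (fun a => I (σ (Fin.castAdd r a))) (fun b => J (τ (Fin.castAdd s b))) *
          θ (fun a => I (σ (Fin.natAdd p a))) (fun b => J (τ (Fin.natAdd q b)))

/-- The contraction map `c : D^{p+1,q+1} → D^{p,q}` (trace over the orthonormal
basis in the first slot of each block). -/
def contr {p q : ℕ} (ω : DForm n (p + 1) (q + 1)) : DForm n p q :=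
  fun I J => ∑ i : Fin n, ω (Fin.cons i I) (Fin.cons i J)

/-- Total version of the contraction (zero when a bidegree is `0`). -/
def contr' : {p q : ℕ} → DForm n p q → DForm n (p - 1) (q - 1)
  | _ + 1, _ + 1, ω => contr ω
  | 0, _, _ => fun _ _ => 0
  | _ + 1, 0, _ => fun _ _ => 0

/-- Iterated contraction `c^k : D^{p+k,q+k} → D^{p,q}`. -/
def cIter {p q : ℕ} : (k : ℕ) → DForm n (p + k) (q + k) → DForm n p q
  | 0, ω => ω
  | k + 1, ω => cIter k (contr ω)

/-- The full contraction `c^p` of a `(p,p)`-double form, a scalar. -/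
def fullc {p : ℕ} (ω : DForm n p p) : ℝ :=
  cIter (p := 0) (q := 0) p
    (cast' (Nat.zero_add p).symm (Nat.zero_add p).symm ω) Fin.elim0 Fin.elim0

/-- The metric of `ℝⁿ` as a `(1,1)`-double form. -/
def gd : DForm n 1 1 := fun I J => if I 0 = J 0 then 1 else 0

/-- Powers `g^p` of the metric in the ring of double forms. -/
def gpow : (p : ℕ) → DForm n p p
  | 0 => fun _ _ => 1
  | p + 1 => mul (gpow p) gd

/-- Powers `ω^k` of a `(p,p)`-double form in the ring of double forms. -/
def pow {p : ℕ} (ω : DForm n p p) : (k : ℕ) → DForm n (p * k) (p * k)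
  | 0 => fun _ _ => 1
  | k + 1 => mul (pow ω k) ω

/-- The natural pointwise inner product on `(p,q)`-double forms. -/
def innerPQ {p q : ℕ} (ω θ : DForm n p q) : ℝ :=
  (((p.factorial * q.factorial : ℕ) : ℝ))⁻¹ *
    ∑ I : Fin p → Fin n, ∑ J : Fin q → Fin n, ω I J * θ I J

/-- The sign of the permutation of `{1,…,n}` obtained by concatenating the
multi-indices `K` and `I` (zero if it is not a permutation). -/
def epsSign {p : ℕ} (hp : p ≤ n) (K : Fin p → Fin n) (I : Fin (n - p) → Fin n) : ℝ :=
  if h : Function.Bijective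
      (fun a : Fin n => Fin.append K I (Fin.cast (by omega) a)) then
    ((Equiv.Perm.sign (Equiv.ofBijective _ h) : ℤ) : ℝ)
  else 0

/-- The generalized Hodge star operator on double forms, acting as the usual
Hodge star on each factor. -/
def hstar {p q : ℕ} (hp : p ≤ n) (hq : q ≤ n) (ω : DForm n p q) :
    DForm n (n - p) (n - q) :=
  fun I J =>
    (((p.factorial * q.factorial : ℕ) : ℝ))⁻¹ *
      ∑ K : Fin p → Fin n, ∑ L : Fin q → Fin n,
        epsSign hp K I * epsSign hq L J * ω K L

/-- The operator `F_h` associated with a symmetric bilinear form `h`: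
in an orthonormal basis diagonalizing `h` it multiplies the `(I,J)` component by
the sum of the eigenvalues of `h` over the indices in `I` and `J`.
Coordinate-free version: insert the endomorphism of `h` in each slot. -/
def Fh {p q : ℕ} (h : Fin n → Fin n → ℝ) (ω : DForm n p q) : DForm n p q :=
  fun I J =>
    (∑ k : Fin p, ∑ i : Fin n, h (I k) i * ω (Function.update I k i) J) +
    (∑ k : Fin q, ∑ i : Fin n, h (J k) i * ω I (Function.update J k i))

/-- A bilinear form on `ℝⁿ` viewed as a `(1,1)`-double form. -/
def ofBilin (h : Fin n → Fin n → ℝ) : DForm n 1 1 := fun I J => h (I 0) (J 0)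

/-- The first Bianchi identity for a `(2,2)`-double form. -/
def Bianchi1 (R : DForm n 2 2) : Prop :=
  ∀ x y z u : Fin n,
    R ![x, y] ![z, u] + R ![y, z] ![x, u] + R ![z, x] ![y, u] = 0

end DForm

end


namespace DForm

variable {n : ℕ}

/-- Extend a multi-index `f` by `I` (auxiliary). -/
def ext {p k : ℕ} (f : Fin k → Fin n) (I : Fin p → Fin n) : Fin (p + k) → Fin n :=
  fun a => if h : (a : ℕ) < k then f ⟨a, h⟩ else I ⟨(a : ℕ) - k, by have := a.isLt; omega⟩

lemma cons_ext {p k : ℕ} (i : Fin n) (f : Fin k → Fin n) (I : Fin p → Fin n) :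
    (Fin.cons i (ext f I) : Fin (p + (k + 1)) → Fin n) = ext (Fin.cons i f) I := by
  funext a
  induction a using Fin.cases with
  | zero => simp [ext]
  | succ b =>
    simp only [Fin.cons_succ, ext, Fin.val_succ]
    rcases lt_or_ge (b : ℕ) k with h | h
    · rw [dif_pos h, dif_pos (by omega)]
      have : (⟨(b : ℕ) + 1, by omega⟩ : Fin (k + 1)) = Fin.succ ⟨(b : ℕ), h⟩ := rfl
      rw [this, Fin.cons_succ]
    · rw [dif_neg (by omega), dif_neg (by omega)]
      congr 1
      apply Fin.ext
      simp only [Fin.val_mk]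
      omega

lemma cIter_eq_sum : ∀ (k : ℕ) {p : ℕ} (ω : DForm n (p + k) (p + k))
    (I J : Fin p → Fin n),
    cIter k ω I J = ∑ f : Fin k → Fin n, ω (ext f I) (ext f J)
  | 0, p, ω, I, J => by
    have h0 : ∀ (I : Fin p → Fin n), ext (Fin.elim0 : Fin 0 → Fin n) I = I := by
      intro I; funext a
      simp [ext]
    rw [Fintype.sum_unique]
    show ω I J = _
    rw [show (default : Fin 0 → Fin n) = Fin.elim0 from funext fun a => a.elim0,
      h0, h0]
  | k + 1, p, ω, I, J => by
    show cIter k (contr ω) I J = _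
    rw [cIter_eq_sum k (contr ω) I J]
    simp only [contr]
    rw [Finset.sum_comm]
    rw [← Fintype.sum_prod_type']
    refine Fintype.sum_bijective (fun x : Fin n × (Fin k → Fin n) => Fin.cons x.1 x.2)
      ?_ _ _ ?_
    · constructor
      · intro x y hxy
        have h1 : x.1 = y.1 := by
          have := congrFun hxy 0; simpa using this
        have h2 : x.2 = y.2 := by
          funext b
          have := congrFun hxy (Fin.succ b); simpa using this
        exact Prod.ext h1 h2
      · intro g
        exact ⟨(g 0, fun b => g (Fin.succ b)), by
          funext a; induction a using Fin.cases <;> simp⟩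
    · rintro ⟨i, f⟩
      show ω (Fin.cons i (ext f I)) (Fin.cons i (ext f J)) = _
      rw [cons_ext, cons_ext]

lemma fullc_eq_sum {p : ℕ} (ω : DForm n p p) :
    fullc ω = ∑ F : Fin p → Fin n, ω F F := by
  have key : ∀ (F : Fin p → Fin n),
      (fun a : Fin p => ext F (Fin.elim0 : Fin 0 → Fin n)
        (Fin.cast (Nat.zero_add p).symm a)) = F := by
    intro F; funext a
    simp only [ext, Fin.coe_cast]
    rw [dif_pos a.isLt]
  show cIter p (cast' (Nat.zero_add p).symm (Nat.zero_add p).symm ω)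
      Fin.elim0 Fin.elim0 = _
  rw [cIter_eq_sum]
  refine Finset.sum_congr rfl fun F _ => ?_
  show ω (fun a => ext F Fin.elim0 (Fin.cast (Nat.zero_add p).symm a))
      (fun a => ext F Fin.elim0 (Fin.cast (Nat.zero_add p).symm a)) = ω F F
  rw [key]

lemma sum_split {m : ℕ} (hm : 1 ≤ m) (g : (Fin m → Fin n) → ℝ) :
    ∑ F : Fin 1 → Fin n, ∑ f : Fin (m - 1) → Fin n,
      g (fun a => if h : (a : ℕ) < m - 1 then f ⟨a, h⟩ else F 0) =
    ∑ G : Fin m → Fin n, g G := by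
  rw [← Fintype.sum_prod_type']
  refine Fintype.sum_bijective
    (fun x : (Fin 1 → Fin n) × (Fin (m - 1) → Fin n) =>
      (fun a : Fin m => if h : (a : ℕ) < m - 1 then x.2 ⟨a, h⟩ else x.1 0)) ?_ _ _
    (fun x => rfl)
  rw [Function.bijective_iff_has_inverse]
  refine ⟨fun G => (fun _ => G ⟨m - 1, by omega⟩, fun b => G ⟨b, by have := b.isLt; omega⟩),
    ?_, ?_⟩
  · rintro ⟨F, f⟩
    refine Prod.ext ?_ ?_
    · funext x
      show (if h : m - 1 < m - 1 then _ else F 0) = F x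
      rw [dif_neg (lt_irrefl _), Subsingleton.elim x 0]
    · funext b
      show (if h : (b : ℕ) < m - 1 then f ⟨(b : ℕ), h⟩ else F 0) = f b
      rw [dif_pos b.isLt]
  · intro G
    funext a
    show (if h : (a : ℕ) < m - 1 then G ⟨(a : ℕ), by have := a.isLt; omega⟩
        else G ⟨m - 1, by omega⟩) = G a
    by_cases h : (a : ℕ) < m - 1
    · rw [dif_pos h]
    · rw [dif_neg h]
      congr 1
      apply Fin.ext
      have := a.isLt
      simp only [Fin.val_mk]
      omega

end DForm

/-- The trace of the `(2q)`-Einstein–Lovelock tensor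
`T_{2q} = h_{2q}·g - (1/(2q-1)!)c^{2q-1}(R^q)` equals `(n-2q)·h_{2q}`, where
`h_{2q} = (1/(2q)!)c^{2q}(R^q)` is the `(2q)`-Gauss-Bonnet curvature. -/
theorem trace_lovelock {n q : ℕ} (hq : 1 ≤ q) (hqn : 2 * q ≤ n)
    (R : DForm n 2 2) (h1 : DForm.IsAlt R) (h2 : DForm.IsSym R)
    (h3 : DForm.Bianchi1 R) :
    DForm.fullc (fun I J : Fin 1 → Fin n =>
        (((2 * q).factorial : ℝ))⁻¹ * DForm.fullc (DForm.pow R q) *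
            DForm.gd I J -
          (((2 * q - 1).factorial : ℝ))⁻¹ *
            DForm.cIter (p := 1) (q := 1) (2 * q - 1)
              (DForm.cast' (by omega) (by omega) (DForm.pow R q)) I J) =
      ((n : ℝ) - 2 * q) *
        ((((2 * q).factorial : ℝ))⁻¹ * DForm.fullc (DForm.pow R q)) := by
  have h2q : (1 : ℕ) ≤ 2 * q := by omega
  set S : ℝ := DForm.fullc (DForm.pow R q) with hS
  set A : ℝ := (((2 * q).factorial : ℝ))⁻¹ * S with hA
  set B : ℝ := (((2 * q - 1).factorial : ℝ))⁻¹ with hB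
  have hgd : ∀ F : Fin 1 → Fin n, DForm.gd F F = 1 := by
    intro F; simp [DForm.gd]
  have key : ∀ F : Fin 1 → Fin n,
      DForm.cIter (p := 1) (q := 1) (2 * q - 1)
        (DForm.cast' (by omega) (by omega) (DForm.pow R q)) F F
      = ∑ f : Fin (2 * q - 1) → Fin n,
          DForm.pow R q
            (fun a => if h : (a : ℕ) < 2 * q - 1 then f ⟨a, h⟩ else F 0)
            (fun a => if h : (a : ℕ) < 2 * q - 1 then f ⟨a, h⟩ else F 0) := by
    intro F
    rw [DForm.cIter_eq_sum]
    refine Finset.sum_congr rfl fun f _ => ?_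
    show DForm.pow R q
        (fun a => DForm.ext f F (Fin.cast (by omega : 2 * q = 1 + (2 * q - 1)) a))
        (fun a => DForm.ext f F (Fin.cast (by omega : 2 * q = 1 + (2 * q - 1)) a)) = _
    have he : (fun a : Fin (2 * q) =>
          DForm.ext f F (Fin.cast (by omega : 2 * q = 1 + (2 * q - 1)) a))
        = fun a : Fin (2 * q) =>
            if h : (a : ℕ) < 2 * q - 1 then f ⟨a, h⟩ else F 0 := by
      funext a
      show (if h : (a : ℕ) < 2 * q - 1 then f ⟨(a : ℕ), h⟩
          else F ⟨(a : ℕ) - (2 * q - 1), by have := a.isLt; omega⟩) = _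
      by_cases h : (a : ℕ) < 2 * q - 1
      · rw [dif_pos h, dif_pos h]
      · rw [dif_neg h, dif_neg h]
        congr 1
        exact Subsingleton.elim _ _
    rw [he]
  refine (DForm.fullc_eq_sum _).trans ?_
  calc ∑ F : Fin 1 → Fin n,
        (A * DForm.gd F F -
          B * DForm.cIter (p := 1) (q := 1) (2 * q - 1)
            (DForm.cast' (by omega) (by omega) (DForm.pow R q)) F F)
      = ∑ F : Fin 1 → Fin n,
          (A - B * ∑ f : Fin (2 * q - 1) → Fin n,
            DForm.pow R q
              (fun a => if h : (a : ℕ) < 2 * q - 1 then f ⟨a, h⟩ else F 0)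
              (fun a => if h : (a : ℕ) < 2 * q - 1 then f ⟨a, h⟩ else F 0)) := by
        refine Finset.sum_congr rfl fun F _ => ?_
        rw [key F, hgd F, mul_one]
    _ = (Fintype.card (Fin 1 → Fin n)) • A -
          B * ∑ F : Fin 1 → Fin n, ∑ f : Fin (2 * q - 1) → Fin n,
            DForm.pow R q
              (fun a => if h : (a : ℕ) < 2 * q - 1 then f ⟨a, h⟩ else F 0)
              (fun a => if h : (a : ℕ) < 2 * q - 1 then f ⟨a, h⟩ else F 0) := by
        rw [Finset.sum_sub_distrib, Finset.sum_const, ← Finset.mul_sum]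
        rfl
    _ = (n : ℝ) * A - B * S := by
        rw [DForm.sum_split h2q (fun G => DForm.pow R q G G), hS,
          DForm.fullc_eq_sum]
        congr 1
        simp
    _ = ((n : ℝ) - 2 * q) * A := by
        have hfacN : (2 * q).factorial = (2 * q) * (2 * q - 1).factorial := by
          conv_lhs => rw [show 2 * q = (2 * q - 1) + 1 from by omega]
          rw [Nat.factorial_succ]
          congr 1
          omega
        have hfac : ((2 * q).factorial : ℝ)
            = (2 * q : ℕ) * ((2 * q - 1).factorial : ℝ) := by
          rw [hfacN]
          push_cast
          ring
        have hc : ((2 * q).factorial : ℝ) ≠ 0 :=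
          Nat.cast_ne_zero.mpr (2 * q).factorial_ne_zero
        have hc' : ((2 * q - 1).factorial : ℝ) ≠ 0 :=
          Nat.cast_ne_zero.mpr (2 * q - 1).factorial_ne_zero
        rw [hA, hB, hfac]
        push_cast
        field_simp
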